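/- Under the scalar sign dynamics, the parameter sequence converges: θ(τ) → θ* as τ → ∞. -/

import Mathlib

open Classical in
/-- Under the scalar sign dynamics, `θ(τ) → θ*` as `τ → ∞`. -/
theorem theta_tendsto_thetaStar
    (θs γ η0 θ0 : ℝ) (hγ0 : 0 < γ) (hγ1 : γ < 1) (hη0 : 0 < η0)
    (θ η s : ℕ → ℝ)
    (hθinit : θ 0 = θ0) (hηinit : η 0 = η0)
    (hs : ∀ τ, s τ = -Real.sign (θ τ - θs))
    (hθrec : ∀ τ, θ (τ + 1) = θ τ + s τ * η τ)
    (hηrec : ∀ τ, η (τ + 1) = if s (τ + 1) * s τ = -1 then γ * η τ else η τ) :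
    Filter.Tendsto θ Filter.atTop (nhds θs) := by
  have ηpos : ∀ τ, 0 < η τ := by
    intro τ
    induction τ with
    | zero => simpa [hηinit] using hη0
    | succ n ih =>
      rw [hηrec n]; split
      · exact mul_pos hγ0 ih
      · exact ih
  have ηmono : ∀ τ, η (τ + 1) ≤ η τ := by
    intro τ
    rw [hηrec τ]; split
    · nlinarith [ηpos τ]
    · exact le_rfl
  have ηanti : ∀ a b : ℕ, a ≤ b → η b ≤ η a :=
    fun a b h => antitone_nat_of_succ_le ηmono h
  have ηlb : ∀ τ, γ * η τ ≤ η (τ + 1) := by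
    intro τ
    rw [hηrec τ]; split
    · exact le_rfl
    · nlinarith [ηpos τ]
  set e : ℕ → ℝ := fun τ => θ τ - θs with hedef
  have erec : ∀ τ, e (τ + 1) = e τ - Real.sign (e τ) * η τ := by
    intro τ
    simp only [hedef]
    rw [hθrec τ, hs τ]
    ring
  have hse : ∀ τ, s τ = -Real.sign (e τ) := hs
  have hθe : θ = fun τ => e τ + θs := by
    funext τ; simp [hedef]
  suffices h : Filter.Tendsto e Filter.atTop (nhds 0) by
    rw [hθe]
    have := h.add_const θs
    rwa [zero_add] at this
  by_cases hz : ∃ τ0, e τ0 = 0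
  · -- e eventually constantly 0
    obtain ⟨τ0, h0⟩ := hz
    have pers : ∀ k, e (τ0 + k) = 0 := by
      intro k
      induction k with
      | zero => exact h0
      | succ n ih =>
        have h' := erec (τ0 + n)
        rw [ih, Real.sign_zero] at h'
        rw [← add_assoc]; simpa using h'
    refine Filter.Tendsto.congr' ?_ (tendsto_const_nhds (x := (0:ℝ)) (f := Filter.atTop))
    filter_upwards [Filter.eventually_ge_atTop τ0] with n hn
    have := pers (n - τ0)
    rw [Nat.add_sub_cancel' hn] at this
    exact this.symm
  push_neg at hz
  -- step lemmas
  have estep : ∀ τ, |e (τ + 1)| = |(|e τ| - η τ)| := by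
    intro τ
    rcases (Ne.lt_or_gt (hz τ)) with hneg | hpos
    · rw [erec τ, Real.sign_of_neg hneg, abs_of_neg hneg]
      rw [show -e τ - η τ = -(e τ + η τ) by ring, abs_neg]
      congr 1; ring
    · rw [erec τ, Real.sign_of_pos hpos, abs_of_pos hpos]
      congr 1; ring
  have noflip : ∀ τ, η τ < |e τ| →
      |e (τ + 1)| = |e τ| - η τ ∧ η (τ + 1) = η τ := by
    intro τ hlt
    rcases (Ne.lt_or_gt (hz τ)) with hneg | hpos
    · have habs : |e τ| = -e τ := abs_of_neg hneg
      have he1 : e (τ + 1) = e τ + η τ := by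
        rw [erec τ, Real.sign_of_neg hneg]; ring
      have hneg1 : e (τ + 1) < 0 := by rw [he1]; linarith
      constructor
      · rw [abs_of_neg hneg1, he1, habs]; ring
      · rw [hηrec τ, if_neg]
        rw [hse τ, hse (τ + 1), Real.sign_of_neg hneg, Real.sign_of_neg hneg1]
        norm_num
    · have habs : |e τ| = e τ := abs_of_pos hpos
      have he1 : e (τ + 1) = e τ - η τ := by
        rw [erec τ, Real.sign_of_pos hpos]; ring
      have hpos1 : 0 < e (τ + 1) := by rw [he1]; linarith
      constructor
      · rw [abs_of_pos hpos1, he1, habs]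
      · rw [hηrec τ, if_neg]
        rw [hse τ, hse (τ + 1), Real.sign_of_pos hpos, Real.sign_of_pos hpos1]
        norm_num
  have flipstep : ∀ τ, |e τ| < η τ → η (τ + 1) = γ * η τ := by
    intro τ hlt
    rcases (Ne.lt_or_gt (hz τ)) with hneg | hpos
    · have habs : |e τ| = -e τ := abs_of_neg hneg
      have he1 : e (τ + 1) = e τ + η τ := by
        rw [erec τ, Real.sign_of_neg hneg]; ring
      have hpos1 : 0 < e (τ + 1) := by rw [he1]; linarith
      rw [hηrec τ, if_pos]
      rw [hse τ, hse (τ + 1), Real.sign_of_neg hneg, Real.sign_of_pos hpos1]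
      norm_num
    · have habs : |e τ| = e τ := abs_of_pos hpos
      have he1 : e (τ + 1) = e τ - η τ := by
        rw [erec τ, Real.sign_of_pos hpos]; ring
      have hneg1 : e (τ + 1) < 0 := by rw [he1]; linarith
      rw [hηrec τ, if_pos]
      rw [hse τ, hse (τ + 1), Real.sign_of_pos hpos, Real.sign_of_neg hneg1]
      norm_num
  -- Phase 1: the invariant is eventually reached
  have phase1 : ∃ τ0, |e τ0| ≤ η τ0 := by
    by_contra hcon
    push_neg at hcon
    have H : ∀ τ, η τ = η0 ∧ |e τ| = |e 0| - τ * η0 := by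
      intro τ
      induction τ with
      | zero => exact ⟨hηinit, by push_cast; ring⟩
      | succ n ih =>
        obtain ⟨hη, he⟩ := ih
        have hlt : η n < |e n| := hcon n
        obtain ⟨h1, h2⟩ := noflip n hlt
        constructor
        · rw [h2, hη]
        · rw [h1, he, hη]; push_cast; ring
    obtain ⟨N, hN⟩ := exists_nat_gt (|e 0| / η0)
    obtain ⟨hη, he⟩ := H N
    have h1 : η N < |e N| := hcon N
    rw [hη, he] at h1
    have : |e 0| / η0 < N := hN
    rw [div_lt_iff₀ hη0] at this
    nlinarith
  obtain ⟨τ0, hτ0⟩ := phase1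
  -- invariant |e τ| ≤ η τ / γ is preserved
  have inv : ∀ τ, |e τ| ≤ η τ / γ → |e (τ + 1)| ≤ η (τ + 1) / γ := by
    intro τ hI
    rcases lt_trichotomy (η τ) (|e τ|) with hlt | heq | hgt
    · obtain ⟨h1, h2⟩ := noflip τ hlt
      rw [h1, h2]
      rw [le_div_iff₀ hγ0] at hI ⊢
      nlinarith [ηpos τ]
    · exfalso
      have := estep τ
      rw [← heq, sub_self, abs_zero] at this
      exact hz (τ + 1) (abs_eq_zero.mp this)
    · have h1 : |e (τ + 1)| = η τ - |e τ| := by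
        rw [estep τ, abs_of_nonpos (by linarith), neg_sub]
      rw [h1, le_div_iff₀ hγ0]
      have := ηlb τ
      nlinarith [abs_pos.mpr (hz τ)]
  have invAll : ∀ k, |e (τ0 + k)| ≤ η (τ0 + k) / γ := by
    intro k
    induction k with
    | zero =>
      simp only [Nat.add_zero]
      refine hτ0.trans ?_
      rw [le_div_iff₀ hγ0]
      nlinarith [ηpos τ0]
    | succ n ih =>
      exact inv (τ0 + n) ih
  -- decay of η
  obtain ⟨m, hm⟩ := exists_nat_gt (1 / γ)
  have decay : ∀ τ, |e τ| ≤ η τ / γ → η (τ + m) ≤ γ * η τ := by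
    intro τ hI
    by_contra hno
    push_neg at hno
    have H : ∀ k, k ≤ m → η (τ + k) = η τ ∧ |e (τ + k)| = |e τ| - k * η τ := by
      intro k hk
      induction k with
      | zero => exact ⟨rfl, by push_cast; ring⟩
      | succ n ih =>
        have hn : n ≤ m := Nat.le_of_succ_le hk
        obtain ⟨hη, he⟩ := ih hn
        rcases lt_trichotomy (η (τ + n)) (|e (τ + n)|) with hlt | heq | hgt
        · obtain ⟨h1, h2⟩ := noflip (τ + n) hlt
          constructor
          · rw [show τ + (n + 1) = τ + n + 1 by ring, h2, hη]
          · rw [show τ + (n + 1) = τ + n + 1 by ring, h1, he, hη]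
            push_cast; ring
        · exfalso
          have := estep (τ + n)
          rw [← heq, sub_self, abs_zero] at this
          exact hz (τ + n + 1) (abs_eq_zero.mp this)
        · exfalso
          have hf : η (τ + n + 1) = γ * η (τ + n) := flipstep (τ + n) hgt
          have h1 : η (τ + m) ≤ η (τ + n + 1) := ηanti _ _ (by omega)
          have h2 : η (τ + n) ≤ η τ := ηanti _ _ (by omega)
          nlinarith [hno]
    obtain ⟨hη, he⟩ := H m le_rfl
    have h1 : (0:ℝ) ≤ |e (τ + m)| := abs_nonneg _
    rw [he] at h1
    have h2 : 1 / γ < (m : ℝ) := hm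
    rw [div_lt_iff₀ hγ0] at h2
    have h3 := ηpos τ
    rw [le_div_iff₀ hγ0] at hI
    nlinarith
  -- geometric decay along τ0 + k * m
  have geo : ∀ k, η (τ0 + k * m) ≤ γ ^ k * η τ0 := by
    intro k
    induction k with
    | zero => simp
    | succ n ih =>
      have hinv : |e (τ0 + n * m)| ≤ η (τ0 + n * m) / γ := invAll (n * m)
      have hd := decay (τ0 + n * m) hinv
      have : τ0 + (n + 1) * m = τ0 + n * m + m := by ring
      rw [this]
      calc η (τ0 + n * m + m) ≤ γ * η (τ0 + n * m) := hd
        _ ≤ γ * (γ ^ n * η τ0) := by nlinarith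
        _ = γ ^ (n + 1) * η τ0 := by ring
  -- conclude
  rw [Metric.tendsto_atTop]
  intro ε hε
  obtain ⟨k, hk⟩ := exists_pow_lt_of_lt_one
    (show 0 < ε * γ / η τ0 by have := ηpos τ0; positivity) hγ1
  refine ⟨τ0 + k * m, fun n hn => ?_⟩
  have h1 : |e n| ≤ η n / γ := by
    have h := invAll (n - τ0)
    rwa [Nat.add_sub_cancel' (by omega : τ0 ≤ n)] at h
  have h2 : η n ≤ η (τ0 + k * m) := ηanti _ _ hn
  have h3 : η (τ0 + k * m) ≤ γ ^ k * η τ0 := geo k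
  have h4 : γ ^ k * η τ0 < ε * γ := by
    rw [lt_div_iff₀ (ηpos τ0)] at hk
    exact hk
  have h5 : |e n| < ε := by
    rw [le_div_iff₀ hγ0] at h1
    nlinarith
  simpa [Real.dist_eq] using h5
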